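/- Let N ≥ 1 and, for each i ∈ {1,…,N}, let n_i ≥ 1, let V_i : ℝ^{n_i} → ℝ, and let α_{1i}, α_{2i}, κ_i > 0 and ρ_i ≥ 0 be constants such that α_{1i}·|ξ|² ≤ V_i(ξ) ≤ α_{2i}·|ξ|² for all ξ ∈ ℝ^{n_i}. Let F_i : ℝ^{n_1}×…×ℝ^{n_N} → ℝ satisfy, for all x = (x_1,…,x_N), F_i(x) ≤ −κ_i·V_i(x_i) + ρ_i·∑_{j≠i} |x_j|². Define Ξ_j := −κ_j + (∑_{i≠j} ρ_i)/α_{1j} and assume the small-gain condition Ξ_j < 0 for all j. Let Ξ be any real with max_j Ξ_j ≤ Ξ < 0 and set κ := −Ξ > 0, α₁ := min_i α_{1i}, α₂ := max_i α_{2i}. Then the function V(x) := ∑_{i=1}^N V_i(x_i) satisfies, for all x = (x_1,…,x_N): (a) α₁·∑_i |x_i|² ≤ V(x) ≤ α₂·∑_i |x_i|²; and (b) ∑_{i=1}^N F_i(x) ≤ −κ·V(x). -/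
import Mathlib


open Finset

/-- Theorem 4 (Compositional Results), stated pointwise: given ISS Lyapunov
functions `V_i` with sandwich constants `α_{1i}, α_{2i}`, decay rates `κ_i`,
ISS gains `ρ_i`, Lie-derivative values `F_i(x) ≤ −κ_i·V_i(x_i) + ρ_i·∑_{j≠i}|x_j|²`,
and the small-gain condition `Ξ_j < 0` for all `j`, the sum `V = ∑ V_i`
satisfies `α₁·|x|² ≤ V(x) ≤ α₂·|x|²` and `∑ F_i(x) ≤ −κ·V(x)` with
`κ = −Ξ`, `α₁ = min α_{1i}`, `α₂ = max α_{2i}`. -/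
theorem compositional_CLF
    (N : ℕ) (hN : 1 ≤ N) (n : Fin N → ℕ) (hn : ∀ i, 1 ≤ n i)
    (V : (i : Fin N) → (Fin (n i) → ℝ) → ℝ)
    (α₁ α₂ κv ρ : Fin N → ℝ)
    (hα₁ : ∀ i, 0 < α₁ i) (hα₂ : ∀ i, 0 < α₂ i)
    (hκv : ∀ i, 0 < κv i) (hρ : ∀ i, 0 ≤ ρ i)
    (hsand : ∀ (i : Fin N) (ξ : Fin (n i) → ℝ),
      α₁ i * (∑ k, ξ k ^ 2) ≤ V i ξ ∧ V i ξ ≤ α₂ i * (∑ k, ξ k ^ 2))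
    (F : Fin N → ((i : Fin N) → Fin (n i) → ℝ) → ℝ)
    (hF : ∀ (i : Fin N) (x : (i : Fin N) → Fin (n i) → ℝ),
      F i x ≤ -κv i * V i (x i) + ρ i * ∑ j ∈ Finset.univ.erase i, (∑ k, x j k ^ 2))
    (Ξf : Fin N → ℝ)
    (hΞf : ∀ j, Ξf j = -κv j + (∑ i ∈ Finset.univ.erase j, ρ i) / α₁ j)
    (hsg : ∀ j, Ξf j < 0)
    (Ξ κ : ℝ) (hΞub : ∀ j, Ξf j ≤ Ξ) (hΞneg : Ξ < 0) (hκ : κ = -Ξ) :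
    ∀ x : (i : Fin N) → Fin (n i) → ℝ,
      ((⨅ i, α₁ i) * (∑ i, ∑ k, x i k ^ 2) ≤ ∑ i, V i (x i) ∧
        ∑ i, V i (x i) ≤ (⨆ i, α₂ i) * (∑ i, ∑ k, x i k ^ 2)) ∧
      ∑ i, F i x ≤ -κ * ∑ i, V i (x i) := by
  intro x
  haveI : Nonempty (Fin N) := Fin.pos_iff_nonempty.mp hN
  set s : Fin N → ℝ := fun i => ∑ k, x i k ^ 2 with hs
  have hs0 : ∀ i, 0 ≤ s i := fun i => Finset.sum_nonneg fun k _ => sq_nonneg _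
  have hVlb : ∀ i, α₁ i * s i ≤ V i (x i) := fun i => (hsand i (x i)).1
  have hVub : ∀ i, V i (x i) ≤ α₂ i * s i := fun i => (hsand i (x i)).2
  have hV0 : ∀ i, 0 ≤ V i (x i) := fun i =>
    le_trans (mul_nonneg (hα₁ i).le (hs0 i)) (hVlb i)
  have hbdd : BddBelow (Set.range α₁) := (Set.finite_range α₁).bddBelow
  have hbdd2 : BddAbove (Set.range α₂) := (Set.finite_range α₂).bddAbove
  refine ⟨⟨?_, ?_⟩, ?_⟩
  · rw [Finset.mul_sum]
    refine Finset.sum_le_sum fun i _ => le_trans ?_ (hVlb i)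
    exact mul_le_mul_of_nonneg_right (ciInf_le hbdd i) (hs0 i)
  · rw [Finset.mul_sum]
    refine Finset.sum_le_sum fun i _ => le_trans (hVub i) ?_
    exact mul_le_mul_of_nonneg_right (le_ciSup hbdd2 i) (hs0 i)
  · have key : ∑ i, F i x ≤ ∑ j, Ξf j * V j (x j) := by
      calc ∑ i, F i x
          ≤ ∑ i, (-κv i * V i (x i) + ρ i * ∑ j ∈ Finset.univ.erase i, s j) :=
            Finset.sum_le_sum fun i _ => hF i x
        _ = ∑ i, (-κv i * V i (x i)) + ∑ i, ∑ j ∈ Finset.univ.erase i, ρ i * s j := by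
            rw [← Finset.sum_add_distrib]
            simp [Finset.mul_sum, mul_sub]
        _ = ∑ i, (-κv i * V i (x i)) + ∑ j, ∑ i ∈ Finset.univ.erase j, ρ i * s j := by
            congr 1
            refine Finset.sum_comm' (fun i j => ?_)
            simp [Finset.mem_erase, and_comm, ne_comm, eq_comm]
        _ = ∑ j, (-κv j * V j (x j) + (∑ i ∈ Finset.univ.erase j, ρ i) * s j) := by
            rw [← Finset.sum_add_distrib]
            simp [Finset.sum_mul, sub_mul]
        _ ≤ ∑ j, Ξf j * V j (x j) := by
            refine Finset.sum_le_sum fun j _ => ?_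
            rw [hΞf j, add_mul, neg_mul]
            have hsle : s j ≤ V j (x j) / α₁ j :=
              (le_div_iff₀' (hα₁ j)).mpr (hVlb j)
            have hρ0 : 0 ≤ ∑ i ∈ Finset.univ.erase j, ρ i :=
              Finset.sum_nonneg fun i _ => hρ i
            have : (∑ i ∈ Finset.univ.erase j, ρ i) * s j ≤
                (∑ i ∈ Finset.univ.erase j, ρ i) / α₁ j * V j (x j) := by
              rw [div_mul_eq_mul_div, le_div_iff₀ (hα₁ j)]
              calc (∑ i ∈ Finset.univ.erase j, ρ i) * s j * α₁ j
                  = (∑ i ∈ Finset.univ.erase j, ρ i) * (α₁ j * s j) := by ring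
                _ ≤ (∑ i ∈ Finset.univ.erase j, ρ i) * V j (x j) :=
                    mul_le_mul_of_nonneg_left (hVlb j) hρ0
            linarith
    calc ∑ i, F i x ≤ ∑ j, Ξf j * V j (x j) := key
      _ ≤ ∑ j, Ξ * V j (x j) :=
          Finset.sum_le_sum fun j _ => mul_le_mul_of_nonneg_right (hΞub j) (hV0 j)
      _ = -κ * ∑ i, V i (x i) := by rw [hκ, neg_neg, Finset.mul_sum]
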